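/- (Uniform Boundedness Principle for multipolynomials) Let E₁, …, E_m be Banach spaces, F a normed space, and {P_i}_{i∈I} a family of continuous (n₁, …, n_m)-homogeneous polynomials from E₁ × ⋯ × E_m to F. If for every x ∈ E₁ × ⋯ × E_m we have sup_{i∈I} ‖P_i(x)‖ < ∞, then sup_{i∈I} ‖P_i‖ < ∞. -/

import Mathlib

open Finset Function

/-- `P : E₁ × ⋯ × E_m → F` is an `(n₁, …, n_m)`-homogeneous polynomial
(multipolynomial): separately, in each variable `i`, it is an `n i`-homogeneous
polynomial, i.e. the diagonal of some `n i`-linear map. -/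
def IsMultiPoly {m : ℕ} {E : Fin m → Type*} [∀ i, NormedAddCommGroup (E i)]
    [∀ i, NormedSpace ℝ (E i)] {F : Type*} [NormedAddCommGroup F] [NormedSpace ℝ F]
    (n : Fin m → ℕ) (P : (∀ i, E i) → F) : Prop :=
  ∀ (i : Fin m) (x : ∀ i, E i), ∃ A : MultilinearMap ℝ (fun _ : Fin (n i) => E i) F,
    ∀ y : E i, P (Function.update x i y) = A (fun _ => y)

lemma combA (d k : ℕ) (hk : k ≤ d) :
    ∑ S : Finset (Fin d), (-1 : ℝ) ^ (Sᶜ.card) * (S.card : ℝ) ^ k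
      = if k = d then (d.factorial : ℝ) else 0 := by
  classical
  have step1 : ∀ S : Finset (Fin d), ((S.card : ℝ)) ^ k
      = ∑ g : Fin k → Fin d, (if Finset.image g univ ⊆ S then (1 : ℝ) else 0) := by
    intro S
    rw [Finset.sum_boole]
    have : (univ.filter fun g : Fin k → Fin d => Finset.image g univ ⊆ S).card
        = Fintype.card {g : Fin k → Fin d // ∀ j, g j ∈ S} := by
      rw [Fintype.card_subtype]
      congr 1
      ext g
      simp [Finset.image_subset_iff]
    rw [this, Fintype.card_congr (Equiv.subtypePiEquivPi (p := fun _ b => b ∈ S)),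
      Fintype.card_fun]
    simp
  calc ∑ S : Finset (Fin d), (-1 : ℝ) ^ (Sᶜ.card) * (S.card : ℝ) ^ k
      = ∑ g : Fin k → Fin d, ∑ S : Finset (Fin d),
          (if Finset.image g univ ⊆ S then (-1 : ℝ) ^ (Sᶜ.card) else 0) := by
        simp_rw [step1, Finset.mul_sum, mul_ite, mul_one, mul_zero]
        rw [Finset.sum_comm]
    _ = ∑ g : Fin k → Fin d, (if Finset.image g univ = univ then (1:ℝ) else 0) := by
        refine Finset.sum_congr rfl fun g _ => ?_
        set T := Finset.image g univ with hT
        rw [Fintype.sum_equiv (⟨compl, compl, compl_compl, compl_compl⟩ :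
            Finset (Fin d) ≃ Finset (Fin d)) _
            (fun V => if T ⊆ Vᶜ then (-1:ℝ)^(V.card) else 0)
          (fun S => by simp [mul_ite])]
        have : ∀ V : Finset (Fin d), (T ⊆ Vᶜ) ↔ V ∈ Tᶜ.powerset := by
          intro V; rw [Finset.mem_powerset, ← Finset.compl_subset_compl, compl_compl]
        simp_rw [this]
        rw [Finset.sum_ite_mem, Finset.univ_inter]
        have := @Finset.sum_powerset_neg_one_pow_card (Fin d) _ Tᶜ
        have h2 : (∑ V ∈ Tᶜ.powerset, (-1:ℝ) ^ V.card)
            = ((∑ V ∈ Tᶜ.powerset, (-1:ℤ) ^ V.card : ℤ) : ℝ) := by push_cast; rfl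
        rw [h2, this]
        by_cases h : T = univ
        · simp [h]
        · have : Tᶜ ≠ ∅ := by
            simp only [ne_eq, Finset.compl_eq_empty_iff]
            exact h
          simp [this, h]
    _ = ((univ.filter fun g : Fin k → Fin d => Function.Surjective g).card : ℝ) := by
        rw [Finset.sum_boole]
        congr 2
        ext g
        simp only [Finset.mem_filter, Finset.mem_univ, true_and]
        constructor
        · intro h y
          have := (Finset.eq_univ_iff_forall.mp h) y
          simpa using this
        · intro h
          apply Finset.eq_univ_iff_forall.mpr
          intro y
          obtain ⟨x, hx⟩ := h y
          exact Finset.mem_image.mpr ⟨x, Finset.mem_univ x, hx⟩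
    _ = if k = d then (d.factorial : ℝ) else 0 := by
        by_cases h : k = d
        · subst h
          rw [if_pos rfl]
          have h1 : (univ.filter fun g : Fin k → Fin k => Function.Surjective g).card
              = Fintype.card {g : Fin k → Fin k // Function.Injective g} := by
            rw [Fintype.card_subtype]
            congr 1; ext g
            simp [Finite.injective_iff_surjective]
          rw [h1, Fintype.card_congr (Equiv.subtypeInjectiveEquivEmbedding (Fin k) (Fin k)),
            Fintype.card_embedding_eq]
          simp [Nat.descFactorial_self]
        · rw [if_neg h]
          have : (univ.filter fun g : Fin k → Fin d => Function.Surjective g) = ∅ := by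
            apply Finset.filter_eq_empty_iff.mpr
            intro g _ hs
            have := Fintype.card_le_of_surjective g hs
            simp at this
            omega
          simp [this]

lemma diag_sum {d : ℕ} {EE F : Type*} [NormedAddCommGroup EE] [NormedSpace ℝ EE]
    [NormedAddCommGroup F] [NormedSpace ℝ F]
    (A : MultilinearMap ℝ (fun _ : Fin d => EE) F) (a u : EE) :
    ∑ S : Finset (Fin d), (-1 : ℝ) ^ (Sᶜ.card) • A (fun _ => a + (S.card : ℝ) • u)
      = (d.factorial : ℝ) • A (fun _ => u) := by
  classical
  have expand : ∀ c : ℝ, A (fun _ => a + c • u)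
      = ∑ T : Finset (Fin d), c ^ T.card • A (T.piecewise (fun _ => u) (fun _ => a)) := by
    intro c
    have h0 : (fun _ : Fin d => a + c • u)
        = (fun _ : Fin d => c • u) + (fun _ : Fin d => a) := by
      funext i; simp [add_comm]
    rw [h0, A.map_add_univ]
    refine Finset.sum_congr rfl fun T _ => ?_
    have h1 : T.piecewise (fun _ : Fin d => c • u) (fun _ => a)
        = T.piecewise (fun i => c • (T.piecewise (fun _ : Fin d => u) (fun _ => a)) i)
            (T.piecewise (fun _ : Fin d => u) (fun _ => a)) := by
      funext i
      by_cases h : i ∈ T <;> simp [Finset.piecewise, h]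
    rw [h1, A.map_piecewise_smul]
    simp
  simp_rw [expand, Finset.smul_sum, smul_smul]
  rw [Finset.sum_comm]
  simp_rw [← Finset.sum_smul]
  have key : ∀ T : Finset (Fin d),
      (∑ S : Finset (Fin d), (-1 : ℝ) ^ (Sᶜ.card) * (S.card : ℝ) ^ T.card)
        = if T.card = d then (d.factorial : ℝ) else 0 := fun T =>
    combA d T.card (by simpa using Finset.card_le_card (Finset.subset_univ T))
  simp_rw [key]
  rw [Finset.sum_eq_single Finset.univ]
  · simp [Finset.card_fin]
  · intro T _ hT
    have : T.card ≠ d := by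
      intro h
      exact hT (Finset.card_eq_iff_eq_univ T |>.mp (by simpa using h))
    simp [this]
  · simp

noncomputable def Cfun (d : ℕ) (r : ℝ) : ℝ := ((d : ℝ) / r) ^ d * 2 ^ d / (d.factorial)

lemma homog_transfer {d : ℕ} {EE F : Type*} [NormedAddCommGroup EE] [NormedSpace ℝ EE]
    [NormedAddCommGroup F] [NormedSpace ℝ F]
    (A : MultilinearMap ℝ (fun _ : Fin d => EE) F) (f : EE → F)
    (hf : ∀ z, f z = A (fun _ => z)) {a : EE} {r N : ℝ} (hr : 0 < r)
    (hb : ∀ z, ‖z - a‖ ≤ r → ‖f z‖ ≤ N) :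
    ∀ y : EE, ‖y‖ ≤ 1 → ‖f y‖ ≤ Cfun d r * N := by
  intro y hy
  have hN : 0 ≤ N := le_trans (norm_nonneg _) (hb a (by simp [hr.le]))
  rcases Nat.eq_zero_or_pos d with hd | hd
  · subst hd
    have : f y = f a := by
      rw [hf, hf]
      congr 1
      exact funext fun i => absurd i.2 (by omega)
    rw [this]
    calc ‖f a‖ ≤ N := hb a (by simp [hr.le])
    _ = Cfun 0 r * N := by simp [Cfun]
  · set t : ℝ := r / d with ht
    have htpos : 0 < t := div_pos hr (by exact_mod_cast hd)
    set u : EE := t • y with hu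
    have hu_norm : ‖u‖ ≤ t := by
      rw [hu, norm_smul, Real.norm_eq_abs, abs_of_pos htpos]
      nlinarith
    -- each point a + c • u with 0 ≤ c ≤ d is in the ball
    have hpoint : ∀ S : Finset (Fin d), ‖f (a + (S.card : ℝ) • u)‖ ≤ N := by
      intro S
      apply hb
      have hc : (S.card : ℝ) ≤ d := by
        exact_mod_cast Finset.card_le_card (Finset.subset_univ S) |>.trans
          (le_of_eq (Finset.card_fin d))
      have : ‖a + (S.card : ℝ) • u - a‖ = (S.card : ℝ) * ‖u‖ := by
        rw [add_sub_cancel_left, norm_smul, Real.norm_eq_abs, abs_of_nonneg (by positivity)]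
      rw [this]
      calc (S.card : ℝ) * ‖u‖ ≤ (d : ℝ) * t := by
            apply mul_le_mul hc hu_norm (norm_nonneg _) (by positivity)
        _ = r := by
            rw [ht]
            field_simp
    -- the identity
    have hid : (d.factorial : ℝ) • f u
        = ∑ S : Finset (Fin d), (-1 : ℝ) ^ (Sᶜ.card) • f (a + (S.card : ℝ) • u) := by
      simp_rw [hf]
      rw [diag_sum]
    have hfu : ‖f u‖ ≤ 2 ^ d * N / d.factorial := by
      have h1 : (d.factorial : ℝ) * ‖f u‖ ≤ 2 ^ d * N := by
        have : ‖(d.factorial : ℝ) • f u‖ ≤ ∑ S : Finset (Fin d), N := by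
          rw [hid]
          refine le_trans (norm_sum_le _ _) (Finset.sum_le_sum fun S _ => ?_)
          rw [norm_smul, norm_pow, norm_neg, norm_one, one_pow, one_mul]
          exact hpoint S
        rw [norm_smul, Real.norm_natCast] at this
        calc (d.factorial : ℝ) * ‖f u‖ ≤ ∑ S : Finset (Fin d), N := this
          _ = 2 ^ d * N := by
              rw [Finset.sum_const, Finset.card_univ, Fintype.card_finset, Fintype.card_fin]
              simp [nsmul_eq_mul]
      have hfac : (0 : ℝ) < d.factorial := by exact_mod_cast d.factorial_pos
      rw [le_div_iff₀ hfac]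
      linarith
    -- homogeneity : f u = t ^ d • f y
    have hhom : f u = t ^ d • f y := by
      rw [hf, hf, hu]
      have : (fun _ : Fin d => t • y) = (fun i : Fin d => t • (fun _ : Fin d => y) i) := rfl
      rw [this, A.map_smul_univ]
      simp
    have hnorm : ‖f u‖ = t ^ d * ‖f y‖ := by
      rw [hhom, norm_smul, Real.norm_eq_abs, abs_of_pos (by positivity)]
    have htd : (0:ℝ) < t ^ d := by positivity
    rw [hnorm] at hfu
    have : ‖f y‖ ≤ 2 ^ d * N / d.factorial / t ^ d := by
      rw [le_div_iff₀ htd]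
      linarith [hfu]
    refine this.trans (le_of_eq ?_)
    rw [Cfun]
    have : ((d:ℝ)/r) = t⁻¹ := by rw [ht]; field_simp
    rw [this, inv_pow]
    ring

lemma multi_transfer {m : ℕ} {E : Fin m → Type*} [∀ i, NormedAddCommGroup (E i)]
    [∀ i, NormedSpace ℝ (E i)] {F : Type*} [NormedAddCommGroup F] [NormedSpace ℝ F]
    (n : Fin m → ℕ) (Q : (∀ i, E i) → F) (hQ : IsMultiPoly n Q)
    (a : ∀ i, E i) {r N : ℝ} (hr : 0 < r)
    (hb : ∀ x : ∀ i, E i, (∀ k, ‖x k - a k‖ ≤ r) → ‖Q x‖ ≤ N) :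
    ∀ x : ∀ i, E i, (∀ k, ‖x k‖ ≤ 1) → ‖Q x‖ ≤ (∏ k, Cfun (n k) r) * N := by
  classical
  suffices H : ∀ s : Finset (Fin m), ∀ x : ∀ i, E i, (∀ k ∈ s, ‖x k‖ ≤ 1) →
      (∀ k ∉ s, ‖x k - a k‖ ≤ r) → ‖Q x‖ ≤ (∏ k ∈ s, Cfun (n k) r) * N by
    intro x hx
    exact H Finset.univ x (fun k _ => hx k) (fun k hk => absurd (Finset.mem_univ k) hk)
  intro s
  induction s using Finset.induction_on with
  | empty =>
    intro x _ h2
    simpa using hb x (fun k => h2 k (Finset.notMem_empty k))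
  | @insert j s hj IH =>
    intro x h1 h2
    obtain ⟨A, hA⟩ := hQ j x
    have hbound : ∀ y : E j, ‖y - a j‖ ≤ r →
        ‖Q (Function.update x j y)‖ ≤ (∏ k ∈ s, Cfun (n k) r) * N := by
      intro y hy
      apply IH
      · intro k hk
        have hkj : k ≠ j := fun h => hj (h ▸ hk)
        rw [Function.update_of_ne hkj]
        exact h1 k (Finset.mem_insert_of_mem hk)
      · intro k hk
        by_cases hkj : k = j
        · subst hkj
          rw [Function.update_self]
          exact hy
        · rw [Function.update_of_ne hkj]
          exact h2 k (by simp [hkj, hk])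
    have := homog_transfer A (fun y => Q (Function.update x j y)) hA hr hbound
      (x j) (h1 j (Finset.mem_insert_self j s))
    simp only [Function.update_eq_self] at this
    calc ‖Q x‖ ≤ Cfun (n j) r * ((∏ k ∈ s, Cfun (n k) r) * N) := this
      _ = (∏ k ∈ insert j s, Cfun (n k) r) * N := by
          rw [Finset.prod_insert hj]; ring

/-- Uniform Boundedness Principle for multipolynomials. -/
theorem stmt8 {m : ℕ} {E : Fin m → Type*} [∀ i, NormedAddCommGroup (E i)]
    [∀ i, NormedSpace ℝ (E i)] [∀ i, CompleteSpace (E i)]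
    {F : Type*} [NormedAddCommGroup F] [NormedSpace ℝ F]
    (n : Fin m → ℕ) {I : Type*} (P : I → (∀ i, E i) → F)
    (hpoly : ∀ i, IsMultiPoly n (P i)) (hcont : ∀ i, Continuous (P i))
    (hptwise : ∀ x : ∀ i, E i, ∃ Cx : ℝ, ∀ i, ‖P i x‖ ≤ Cx) :
    ∃ C : ℝ, ∀ i, ∀ x : ∀ i, E i, (∀ k, ‖x k‖ ≤ 1) → ‖P i x‖ ≤ C := by
  classical
  -- the closed sets
  set A : ℕ → Set (∀ i, E i) := fun N => {x | ∀ i, ‖P i x‖ ≤ N} with hA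
  have hclosed : ∀ N, IsClosed (A N) := by
    intro N
    have : A N = ⋂ i, {x | ‖P i x‖ ≤ N} := by
      ext x; simp [hA, Set.mem_iInter]
    rw [this]
    exact isClosed_iInter fun i => isClosed_le ((hcont i).norm) continuous_const
  have hcover : (⋃ N, A N) = Set.univ := by
    apply Set.eq_univ_iff_forall.mpr
    intro x
    obtain ⟨Cx, hCx⟩ := hptwise x
    refine Set.mem_iUnion.mpr ⟨⌈Cx⌉₊, fun i => (hCx i).trans (Nat.le_ceil Cx |>.trans ?_)⟩
    exact_mod_cast le_refl _
  haveI : CompleteSpace (∀ i, E i) := by infer_instance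
  haveI : BaireSpace (∀ i, E i) := BaireSpace.of_completelyPseudoMetrizable
  obtain ⟨N, hN⟩ := nonempty_interior_of_iUnion_of_closed hclosed hcover
  obtain ⟨x₀, hx₀⟩ := hN
  rw [mem_interior_iff_mem_nhds, Metric.mem_nhds_iff] at hx₀
  obtain ⟨ε, hε, hball⟩ := hx₀
  set r : ℝ := ε / 2 with hrdef
  have hr : 0 < r := by positivity
  have hpoly_ball : ∀ x : ∀ i, E i, (∀ k, ‖x k - x₀ k‖ ≤ r) → x ∈ A N := by
    intro x hx
    apply hball
    rw [Metric.mem_ball]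
    have : dist x x₀ ≤ r := by
      rw [dist_pi_le_iff hr.le]
      intro k
      rw [dist_eq_norm]
      exact hx k
    linarith [this]
  refine ⟨(∏ k, Cfun (n k) r) * N, fun i x hx => ?_⟩
  exact multi_transfer n (P i) (hpoly i) x₀ hr
    (fun z hz => hpoly_ball z hz i) x hx
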